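/- (Lemma 3.8, Euclidean case Q̄ = ℝ^n.) Suppose the smooth vector field X on ℝ^n × ℝ^n satisfies the reduced Chaplygin equations i_X(Ω − Ξ) = dH, where Ξ is a fiber-linear semibasic two-form, and let f: ℝ^n → ℝ be smooth and nowhere-vanishing. Then the Chaplygin-rescaled vector field X_C satisfies, for all z = (q,p) and all v ∈ ℝ^n × ℝ^n: Ω(X_C(z), v) + (1/f(q))·[(df ∧ Θ)_z(X_C(z), v) − f(q)·Ξ_z(X_C(z), v)] = DH_C(z)[v], where H_C is the Chaplygin Hamiltonian. -/

import Mathlib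

noncomputable section

open Matrix

/-- Configuration vectors: points of `ℝⁿ`. -/
abbrev Vec (n : ℕ) : Type := Fin n → ℝ

/-- Phase space `ℝⁿ × ℝⁿ`, points `z = (q, p)`. -/
abbrev Phase (n : ℕ) : Type := Vec n × Vec n

/-- Canonical symplectic form `Ω(u,v) = ⟨u_q, v_p⟩ − ⟨u_p, v_q⟩`. -/
def Omega {n : ℕ} (u v : Phase n) : ℝ := u.1 ⬝ᵥ v.2 - u.2 ⬝ᵥ v.1

/-- Liouville one-form `Θ_z(v) = ⟨p, v_q⟩` at `z = (q,p)`. -/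
def Theta {n : ℕ} (z v : Phase n) : ℝ := z.2 ⬝ᵥ v.1

/-- Fiber scaling `Ψ_f(q,p) = (q, f(q)·p)`. -/
def Psi {n : ℕ} (f : Vec n → ℝ) (z : Phase n) : Phase n := (z.1, f z.1 • z.2)

/-- `Ψ_{1/f}`, the inverse of `Ψ_f`. -/
def PsiInv {n : ℕ} (f : Vec n → ℝ) : Phase n → Phase n := Psi fun q => (f q)⁻¹

/-- The Chaplygin-rescaled vector field
`X_C(z) := DΨ_f(Ψ_{1/f}(z))[(1/f(q))·X(Ψ_{1/f}(z))]`. -/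
def ChapRescale {n : ℕ} (f : Vec n → ℝ) (X : Phase n → Phase n) (z : Phase n) : Phase n :=
  fderiv ℝ (Psi f) (PsiInv f z) ((f z.1)⁻¹ • X (PsiInv f z))

/-- The two-form `df ∧ Θ`. -/
def dfTheta {n : ℕ} (f : Vec n → ℝ) (z u v : Phase n) : ℝ :=
  fderiv ℝ f z.1 u.1 * (z.2 ⬝ᵥ v.1) - fderiv ℝ f z.1 v.1 * (z.2 ⬝ᵥ u.1)

/-- Divergence of a vector field: `div Y (z) = trace DY(z)`. -/
def divergence {n : ℕ} (Y : Phase n → Phase n) (z : Phase n) : ℝ :=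
  LinearMap.trace ℝ (Phase n) (fderiv ℝ Y z).toLinearMap

/-- A fiber-linear semibasic two-form on phase space: a smooth assignment
`z ↦ Ξ_z` of alternating bilinear forms whose value depends only on the base
components of its arguments, and which is linear in the fiber variable `p`. -/
structure FiberLinearSemibasicTwoForm (n : ℕ) where
  form : Phase n → Phase n → Phase n → ℝ
  smooth : ∀ u v : Phase n, ContDiff ℝ (⊤ : ℕ∞) fun z => form z u v
  alt : ∀ z u v : Phase n, form z u v = - form z v u
  add_left : ∀ (z u u' v : Phase n), form z (u + u') v = form z u v + form z u' v
  smul_left : ∀ (z : Phase n) (c : ℝ) (u v : Phase n), form z (c • u) v = c * form z u v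
  semibasic : ∀ (z u v u' v' : Phase n), u.1 = u'.1 → v.1 = v'.1 → form z u v = form z u' v'
  fiber_add : ∀ (q p p' : Vec n) (u v : Phase n),
    form (q, p + p') u v = form (q, p) u v + form (q, p') u v
  fiber_smul : ∀ (q : Vec n) (c : ℝ) (p : Vec n) (u v : Phase n),
    form (q, c • p) u v = c * form (q, p) u v

lemma hasFDerivAt_Psi {n : ℕ} (g : Vec n → ℝ) (hg : Differentiable ℝ g) (z : Phase n) :
    HasFDerivAt (Psi g)
      ((ContinuousLinearMap.fst ℝ (Vec n) (Vec n)).prod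
        (g z.1 • ContinuousLinearMap.snd ℝ (Vec n) (Vec n)
          + (((fderiv ℝ g z.1).comp (ContinuousLinearMap.fst ℝ (Vec n) (Vec n))).smulRight z.2))) z := by
  have h1 : HasFDerivAt (fun w : Phase n => g w.1)
      ((fderiv ℝ g z.1).comp (ContinuousLinearMap.fst ℝ (Vec n) (Vec n))) z :=
    ((hg z.1).hasFDerivAt).comp z hasFDerivAt_fst
  exact HasFDerivAt.prodMk hasFDerivAt_fst (h1.smul hasFDerivAt_snd)

lemma fderiv_Psi_apply {n : ℕ} (g : Vec n → ℝ) (hg : Differentiable ℝ g) (z v : Phase n) :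
    fderiv ℝ (Psi g) z v = (v.1, g z.1 • v.2 + (fderiv ℝ g z.1 v.1) • z.2) := by
  rw [(hasFDerivAt_Psi g hg z).fderiv]; simp

theorem statement2 (n : ℕ) (hn : 1 ≤ n) (X : Phase n → Phase n) (H : Phase n → ℝ)
    (Ξ : FiberLinearSemibasicTwoForm n) (f : Vec n → ℝ)
    (hX : ContDiff ℝ (⊤ : ℕ∞) X) (hH : ContDiff ℝ (⊤ : ℕ∞) H)
    (hf : ContDiff ℝ (⊤ : ℕ∞) f) (hf0 : ∀ q, f q ≠ 0)
    (heq : ∀ (z v : Phase n), Omega (X z) v - Ξ.form z (X z) v = fderiv ℝ H z v) :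
    ∀ (z v : Phase n),
      Omega (ChapRescale f X z) v
        + (f z.1)⁻¹ * (dfTheta f z (ChapRescale f X z) v
            - f z.1 * Ξ.form z (ChapRescale f X z) v)
      = fderiv ℝ (fun w => H (PsiInv f w)) z v := by
  intro z v
  have hfd : Differentiable ℝ f := hf.differentiable (by norm_num)
  have hF : f z.1 ≠ 0 := hf0 z.1
  set g : Vec n → ℝ := fun q => (f q)⁻¹ with hg
  have hgd : Differentiable ℝ g := hfd.inv hf0
  set w : Phase n := (z.1, (f z.1)⁻¹ • z.2) with hwdef
  have hw : PsiInv f z = w := rfl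
  have hgder : ∀ u : Vec n, fderiv ℝ g z.1 u = -(f z.1 ^ 2)⁻¹ * fderiv ℝ f z.1 u := by
    intro u
    have h := (HasDerivAt.comp_hasFDerivAt z.1 (hasDerivAt_inv hF) (hfd z.1).hasFDerivAt).fderiv
    have h2 : (fun q => (f q)⁻¹) = (fun y : ℝ => y⁻¹) ∘ f := rfl
    rw [hg, h2, h]
    simp [smul_eq_mul]
  have hXC : ChapRescale f X z =
      ((f z.1)⁻¹ • (X w).1,
        (X w).2 + ((f z.1)⁻¹ * (f z.1)⁻¹ * fderiv ℝ f z.1 (X w).1) • z.2) := by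
    rw [ChapRescale, hw, fderiv_Psi_apply f hfd]
    ext
    · simp
    · simp [hwdef, smul_smul, _root_.map_smul, mul_comm, mul_assoc, mul_inv_cancel₀ hF]
  have hΞ : Ξ.form z (ChapRescale f X z) v = Ξ.form w (X w) v := by
    have h1 : Ξ.form z (ChapRescale f X z) v = Ξ.form z ((f z.1)⁻¹ • X w) v := by
      apply Ξ.semibasic _ _ _ _ _ _ rfl
      rw [hXC]; rfl
    rw [h1, Ξ.smul_left]
    have h2 : (z.1, z.2) = z := rfl
    have h3 : Ξ.form z (X w) v = f z.1 * Ξ.form w (X w) v := by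
      conv_lhs => rw [← h2, show z.2 = f z.1 • ((f z.1)⁻¹ • z.2) by
        rw [smul_smul, mul_inv_cancel₀ hF, one_smul]]
      rw [Ξ.fiber_smul]
    rw [h3, ← mul_assoc, inv_mul_cancel₀ hF, one_mul]
  set v' : Phase n := (v.1, g z.1 • v.2 + (fderiv ℝ g z.1 v.1) • z.2) with hv'
  have hRHS : fderiv ℝ (fun u => H (PsiInv f u)) z v = fderiv ℝ H w v' := by
    have hc : HasFDerivAt (fun u => H (PsiInv f u))
        ((fderiv ℝ H (PsiInv f z)).comp
          ((ContinuousLinearMap.fst ℝ (Vec n) (Vec n)).prod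
            (g z.1 • ContinuousLinearMap.snd ℝ (Vec n) (Vec n)
              + (((fderiv ℝ g z.1).comp (ContinuousLinearMap.fst ℝ (Vec n) (Vec n))).smulRight z.2)))) z :=
      ((hH.differentiable (by norm_num) (PsiInv f z)).hasFDerivAt).comp z (hasFDerivAt_Psi g hgd z)
    rw [hc.fderiv, hw]
    simp [hv']
  have key := heq w v'
  have hΞ' : Ξ.form w (X w) v' = Ξ.form w (X w) v := Ξ.semibasic _ _ _ _ _ rfl rfl
  rw [hRHS, ← key, hΞ', hΞ, hXC]
  simp only [Omega, dfTheta, hv', hgder]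
  simp only [hg]
  simp only [add_dotProduct, dotProduct_add, smul_dotProduct, dotProduct_smul,
    smul_eq_mul, _root_.map_smul]
  rw [dotProduct_comm (X w).1 z.2]
  field_simp
  ring
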